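/- Let K be a field of characteristic zero, s ≥ 3, r ≥ 2, and assume r ≥ 3 or s ≥ 4. Let L be the free nilpotent Lie algebra of rank r and step s over K with generators X_1, …, X_r. Define η_i = (ad X_i)^{s−2}(X_{i+1}) for i = 1, …, r−1 and η_r = (ad X_r)^{s−2}(X_1). Then the family (η_1, …, η_r) is linearly independent in L, and the family (⁅X_1, η_1⁆, …, ⁅X_r, η_r⁆) is linearly independent in L. -/

import Mathlib

/-- The free nilpotent Lie algebra of rank `r` and step `s` over `K`: the quotient of the
free Lie algebra `F` on `r` generators by the `s`-th term `C_s(F)` of its lower central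
series (`C_0 = F`, `C_{k+1} = ⁅F, C_k⁆`). -/
abbrev FreeNilpotentLie (K : Type*) [Field K] (r s : ℕ) :=
  FreeLieAlgebra K (Fin r) ⧸
    LieModule.lowerCentralSeries K (FreeLieAlgebra K (Fin r)) (FreeLieAlgebra K (Fin r)) s

/-- The canonical generators `X_1, …, X_r` of the free nilpotent Lie algebra, i.e. the images
of the free generators. -/
noncomputable def FreeNilpotentLie.gen (K : Type*) [Field K] (r s : ℕ) (i : Fin r) :
    FreeNilpotentLie K r s :=
  LieSubmodule.Quotient.mk' _ (FreeLieAlgebra.of K i)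

/-- `G₁`: the `K`-span of the generators. -/
noncomputable def FreeNilpotentLie.G1 (K : Type*) [Field K] (r s : ℕ) :
    Submodule K (FreeNilpotentLie K r s) :=
  Submodule.span K (Set.range (FreeNilpotentLie.gen K r s))

namespace Stmt8

variable (K : Type*) [Field K] (r : ℕ)

/-! ### Fin rotation facts -/

theorem finRotate_ne (hr : 2 ≤ r) : ∀ a : Fin r, finRotate r a ≠ a := by
  obtain ⟨m, rfl⟩ : ∃ m, r = m + 2 := ⟨r - 2, by omega⟩
  intro a h
  rw [finRotate_succ_apply] at h
  nth_rewrite 2 [← add_zero a] at h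
  exact one_ne_zero (add_left_cancel h)

theorem finRotate_sq_ne (hr : 3 ≤ r) : ∀ a : Fin r, finRotate r (finRotate r a) ≠ a := by
  obtain ⟨m, rfl⟩ : ∃ m, r = m + 3 := ⟨r - 3, by omega⟩
  intro a h
  simp only [finRotate_succ_apply, add_assoc] at h
  nth_rewrite 2 [← add_zero a] at h
  have h2 : (1 + 1 : Fin (m + 3)) = 0 := add_left_cancel h
  have hv := congrArg Fin.val h2
  rw [Fin.val_add, Fin.val_one, Fin.val_zero] at hv
  have : (1 + 1) % (m + 3) = 2 := Nat.mod_eq_of_lt (by omega)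
  omega

/-! ### The monoid-algebra realization -/

abbrev A := MonoidAlgebra K (FreeMonoid (Fin r))

attribute [local instance 100] LieRing.ofAssociativeRing

noncomputable def G : FreeLieAlgebra K (Fin r) →ₗ⁅K⁆ A K r :=
  FreeLieAlgebra.lift K fun i => MonoidAlgebra.single (FreeMonoid.of i) 1

/-- words of length ≥ k -/
def V (k : ℕ) : Submodule K (A K r) where
  carrier := {p | ∀ w : FreeMonoid (Fin r), (FreeMonoid.toList w).length < k → p.coeff w = 0}
  add_mem' := by intro a b ha hb w hw; show a.coeff w + b.coeff w = 0; rw [ha w hw, hb w hw, add_zero]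
  zero_mem' := fun w hw => rfl
  smul_mem' := by intro c a ha w hw; show c • a.coeff w = 0; rw [ha w hw, smul_zero]

theorem mul_mem_V {a b : ℕ} {p q : A K r} (hp : p ∈ V K r a) (hq : q ∈ V K r b) :
    p * q ∈ V K r (a + b) := by
  classical
  intro w hw
  rw [MonoidAlgebra.coeff_mul]
  simp only [Finsupp.sum]
  apply Finset.sum_eq_zero
  intro u hu
  apply Finset.sum_eq_zero
  intro v hv
  split_ifs with huv
  · have hlen : (FreeMonoid.toList u).length + (FreeMonoid.toList v).length
        = (FreeMonoid.toList w).length := by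
      rw [← huv, FreeMonoid.toList_mul, List.length_append]
    rcases lt_or_ge (FreeMonoid.toList u).length a with h1 | h1
    · rw [hp u h1, zero_mul]
    · have : (FreeMonoid.toList v).length < b := by omega
      rw [hq v this, mul_zero]
  · rfl

theorem V_antitone {a b : ℕ} (hab : a ≤ b) : V K r b ≤ V K r a := by
  intro p hp w hw; exact hp w (lt_of_lt_of_le hw hab)

theorem lie_mem_V {a b : ℕ} {p q : A K r} (hp : p ∈ V K r a) (hq : q ∈ V K r b) :
    ⁅p, q⁆ ∈ V K r (a + b) := by
  rw [Ring.lie_def]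
  exact sub_mem (mul_mem_V K r hp hq) (by rw [add_comm]; exact mul_mem_V K r hq hp)

theorem single_of_mem_V1 (i : Fin r) :
    (MonoidAlgebra.single (FreeMonoid.of i) 1 : A K r) ∈ V K r 1 := by
  classical
  intro w hw
  have hw1 : w = 1 := by
    have := List.length_eq_zero_iff.mp (Nat.lt_one_iff.mp hw)
    exact FreeMonoid.toList.injective this
  subst hw1
  rw [MonoidAlgebra.single_apply, if_neg]
  intro hcon
  exact absurd (congrArg FreeMonoid.toList hcon) (by simp [FreeMonoid.toList_of])

noncomputable def V1sub : LieSubalgebra K (A K r) :=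
  { V K r 1 with
    lie_mem' := fun {p q} hp hq =>
      V_antitone K r (by norm_num) (lie_mem_V K r (a := 1) (b := 1) hp hq) }

theorem G_mem_V1 (x : FreeLieAlgebra K (Fin r)) : G K r x ∈ V K r 1 := by
  let h : FreeLieAlgebra K (Fin r) →ₗ⁅K⁆ V1sub K r :=
    FreeLieAlgebra.lift K fun i =>
      (⟨MonoidAlgebra.single (FreeMonoid.of i) 1, single_of_mem_V1 K r i⟩ : V1sub K r)
  have key : ((V1sub K r).incl).comp h = G K r := by
    apply FreeLieAlgebra.hom_ext
    intro i
    simp only [LieHom.comp_apply, h, FreeLieAlgebra.lift_of_apply, G]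
    rfl
  have : G K r x = (V1sub K r).incl (h x) := by rw [← key]; rfl
  rw [this]
  exact (h x).2

theorem lcs_mem_V (k : ℕ) (x : FreeLieAlgebra K (Fin r))
    (hx : x ∈ LieModule.lowerCentralSeries K (FreeLieAlgebra K (Fin r))
      (FreeLieAlgebra K (Fin r)) k) :
    G K r x ∈ V K r (k + 1) := by
  induction k generalizing x with
  | zero => exact G_mem_V1 K r x
  | succ k ih =>
    rw [LieModule.lowerCentralSeries_succ, ← LieSubmodule.mem_toSubmodule,
      LieSubmodule.lieIdeal_oper_eq_linear_span] at hx
    have hle : Submodule.span K {m | ∃ (a : (⊤ : LieIdeal K (FreeLieAlgebra K (Fin r))))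
          (n : LieModule.lowerCentralSeries K (FreeLieAlgebra K (Fin r))
            (FreeLieAlgebra K (Fin r)) k),
          ⁅(a : FreeLieAlgebra K (Fin r)), (n : FreeLieAlgebra K (Fin r))⁆ = m}
        ≤ Submodule.comap (G K r).toLinearMap (V K r (k + 2)) := by
      rw [Submodule.span_le]
      rintro m ⟨a, n, rfl⟩
      simp only [SetLike.mem_coe, Submodule.mem_comap, LieHom.coe_toLinearMap, LieHom.map_lie]
      have h1 : G K r a ∈ V K r 1 := G_mem_V1 K r a
      have h2 : G K r n ∈ V K r (k + 1) := ih n n.2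
      have := lie_mem_V K r h1 h2
      convert this using 2
      omega
    exact hle hx

/-! ### Words and the expansion of `(ad x)^n y` -/

def wrd (n k : ℕ) (j t : Fin r) : FreeMonoid (Fin r) :=
  FreeMonoid.ofList (List.replicate (n - k) j ++ t :: List.replicate k j)

theorem wrd_len (n k : ℕ) (hk : k ≤ n) (j t : Fin r) :
    (FreeMonoid.toList (wrd r n k j t)).length = n + 1 := by
  unfold wrd
  rw [FreeMonoid.toList_ofList, List.length_append, List.length_replicate, List.length_cons,
    List.length_replicate]
  omega

theorem of_mul_wrd {n k : ℕ} (hk : k ≤ n) (j t : Fin r) :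
    FreeMonoid.of j * wrd r n k j t = wrd r (n + 1) k j t := by
  unfold wrd
  rw [← FreeMonoid.ofList_singleton, ← FreeMonoid.ofList_append,
    show n + 1 - k = (n - k) + 1 by omega, List.replicate_succ]
  rfl

theorem wrd_mul_of (n k : ℕ) (j t : Fin r) :
    wrd r n k j t * FreeMonoid.of j = wrd r (n + 1) (k + 1) j t := by
  unfold wrd
  rw [← FreeMonoid.ofList_singleton, ← FreeMonoid.ofList_append]
  congr 1
  simp [Nat.succ_sub_succ, List.replicate_succ', List.append_assoc]

theorem wrd_ne_diag {n k : ℕ} (hk1 : 1 ≤ k) (hkn : k ≤ n) {j t : Fin r} (htj : t ≠ j) :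
    wrd r n k j t ≠ wrd r n 0 j t := by
  intro h
  have hl : List.replicate (n - k) j ++ t :: List.replicate k j
      = List.replicate (n - 0) j ++ t :: List.replicate 0 j :=
    congrArg FreeMonoid.toList h
  have hrev := congrArg List.reverse hl
  simp only [List.reverse_append, List.reverse_cons, List.reverse_replicate] at hrev
  obtain ⟨k', rfl⟩ : ∃ k', k = k' + 1 := ⟨k - 1, by omega⟩
  rw [List.replicate_succ] at hrev
  simp only [Nat.sub_zero, List.replicate, List.nil_append, List.append_assoc,
    List.cons_append, List.singleton_append] at hrev
  exact htj (by injection hrev with h1 _ ; exact h1.symm)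

theorem wrd_ne_cross {n k : ℕ} (hk : k ≤ n) (hn1 : 1 ≤ n) {i j : Fin r} (hij : i ≠ j)
    (hrot : ∀ a : Fin r, finRotate r a ≠ a)
    (hcase : 2 ≤ n ∨ ∀ a : Fin r, finRotate r (finRotate r a) ≠ a) :
    wrd r n k j (finRotate r j) ≠ wrd r n 0 i (finRotate r i) := by
  intro h
  have hl : List.replicate (n - k) j ++ finRotate r j :: List.replicate k j
      = List.replicate (n - 0) i ++ finRotate r i :: List.replicate 0 i :=
    congrArg FreeMonoid.toList h
  rcases Nat.lt_or_ge n 2 with hn | hn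
  · have hn' : n = 1 := by omega
    subst hn'
    rcases hcase with h2 | h2
    · omega
    interval_cases k
    · simp only [List.replicate, Nat.sub_zero, List.nil_append, List.cons_append] at hl
      injection hl with h1 _
      exact hij h1.symm
    · simp only [List.replicate, Nat.sub_zero, Nat.sub_self, List.nil_append,
        List.cons_append, List.singleton_append] at hl
      injection hl with h1 h2'
      injection h2' with h3 _
      apply h2 j
      rw [h1, ← h3]
  · have hcount := congrArg (List.count i) hl
    simp only [List.count_append, List.count_replicate, List.count_cons, List.count_nil] at hcount
    simp only [beq_iff_eq, if_true, if_neg (hrot i), if_neg (Ne.symm hij)] at hcount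
    have h1 : (if finRotate r j = i then 1 else 0) ≤ 1 := by split <;> omega
    omega

theorem adpow_expand (j t : Fin r) (n : ℕ) :
    G K r ((LieAlgebra.ad K (FreeLieAlgebra K (Fin r)) (FreeLieAlgebra.of K j) ^ n)
      (FreeLieAlgebra.of K t)) =
    ∑ k ∈ Finset.range (n + 1),
      (MonoidAlgebra.single (wrd r n k j t) ((-1 : K) ^ k * (n.choose k : K)) : A K r) := by
  induction n with
  | zero =>
    rw [pow_zero, Module.End.one_apply, G, FreeLieAlgebra.lift_of_apply,
      Finset.range_one, Finset.sum_singleton]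
    have h1 : ((-1 : K) ^ 0 * ((Nat.choose 0 0 : ℕ) : K)) = 1 := by norm_num
    rw [h1]
    rfl
  | succ n ih =>
    rw [pow_succ', Module.End.mul_apply, LieAlgebra.ad_apply, LieHom.map_lie, ih, Ring.lie_def]
    have hGj : G K r (FreeLieAlgebra.of K j)
        = (MonoidAlgebra.single (FreeMonoid.of j) 1 : A K r) := by
      rw [G, FreeLieAlgebra.lift_of_apply]
    rw [hGj, Finset.mul_sum, Finset.sum_mul]
    have hS1 : ∀ k ∈ Finset.range (n + 1),
        (MonoidAlgebra.single (FreeMonoid.of j) 1 : A K r)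
          * MonoidAlgebra.single (wrd r n k j t) ((-1 : K) ^ k * (n.choose k : K))
        = MonoidAlgebra.single (wrd r (n+1) k j t) ((-1 : K) ^ k * (n.choose k : K)) := by
      intro k hk
      rw [MonoidAlgebra.single_mul_single, one_mul,
        of_mul_wrd r (Nat.lt_succ_iff.mp (Finset.mem_range.mp hk))]
    have hS2 : ∀ k ∈ Finset.range (n + 1),
        (MonoidAlgebra.single (wrd r n k j t) ((-1 : K) ^ k * (n.choose k : K)) : A K r)
          * MonoidAlgebra.single (FreeMonoid.of j) 1
        = MonoidAlgebra.single (wrd r (n+1) (k+1) j t) ((-1 : K) ^ k * (n.choose k : K)) := by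
      intro k hk
      rw [MonoidAlgebra.single_mul_single, mul_one, wrd_mul_of]
    rw [Finset.sum_congr rfl hS1, Finset.sum_congr rfl hS2]
    set w' : ℕ → FreeMonoid (Fin r) := fun k => wrd r (n+1) k j t with hw'
    set c : ℕ → K := fun k => (-1 : K) ^ k * (n.choose k : K) with hc
    set b : ℕ → K := fun k => (-1 : K) ^ k * ((n+1).choose k : K) with hb
    symm
    show (∑ k ∈ Finset.range (n + 2), MonoidAlgebra.single (w' k) (b k) : A K r)
      = ∑ k ∈ Finset.range (n + 1), MonoidAlgebra.single (w' k) (c k)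
        - ∑ k ∈ Finset.range (n + 1), MonoidAlgebra.single (w' (k+1)) (c k)
    rw [Finset.sum_range_succ' (fun k => (MonoidAlgebra.single (w' k) (b k) : A K r))]
    have hb0 : b 0 = 1 := by simp [hb]
    have hbsplit : ∀ k, (MonoidAlgebra.single (w' (k+1)) (b (k+1)) : A K r)
        = MonoidAlgebra.single (w' (k+1)) (c (k+1)) - MonoidAlgebra.single (w' (k+1)) (c k) := by
      intro k
      rw [← MonoidAlgebra.single_sub]
      congr 1
      simp only [hb, hc, Nat.choose_succ_succ, Nat.cast_add, pow_succ]
      ring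
    simp only [hbsplit]
    rw [Finset.sum_sub_distrib, hb0]
    have hS1' : (∑ k ∈ Finset.range (n + 1), MonoidAlgebra.single (w' k) (c k) : A K r)
        = (∑ k ∈ Finset.range n, MonoidAlgebra.single (w' (k+1)) (c (k+1))) +
          MonoidAlgebra.single (w' 0) (1 : K) := by
      rw [Finset.sum_range_succ' (fun k => (MonoidAlgebra.single (w' k) (c k) : A K r))]
      congr 1
      simp [hc]
    have hlast : (MonoidAlgebra.single (w' (n+1)) (c (n+1)) : A K r) = 0 := by
      have : c (n+1) = 0 := by simp [hc, Nat.choose_succ_self]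
      rw [this]; simp
    have hS1'' : (∑ k ∈ Finset.range (n + 1), MonoidAlgebra.single (w' (k+1)) (c (k+1)) : A K r)
        = ∑ k ∈ Finset.range n, MonoidAlgebra.single (w' (k+1)) (c (k+1)) := by
      rw [Finset.sum_range_succ, hlast, add_zero]
    rw [hS1'', hS1']
    abel

/-! ### Coefficient evaluations -/

theorem coeff_diag (j t : Fin r) (htj : t ≠ j) (n : ℕ) :
    (G K r ((LieAlgebra.ad K (FreeLieAlgebra K (Fin r)) (FreeLieAlgebra.of K j) ^ n)
      (FreeLieAlgebra.of K t))).coeff (wrd r n 0 j t) = 1 := by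
  classical
  rw [adpow_expand, MonoidAlgebra.coeff_sum, Finsupp.finset_sum_apply]
  rw [Finset.sum_eq_single_of_mem 0 (by simp)]
  · rw [MonoidAlgebra.single_apply, if_pos rfl]; norm_num
  · intro k hk hk0
    rw [MonoidAlgebra.single_apply,
      if_neg (wrd_ne_diag r (by omega) (Nat.lt_succ_iff.mp (Finset.mem_range.mp hk)) htj)]

theorem coeff_cross {i j : Fin r} (hij : i ≠ j) (n : ℕ) (hn1 : 1 ≤ n)
    (hrot : ∀ a : Fin r, finRotate r a ≠ a)
    (hcase : 2 ≤ n ∨ ∀ a : Fin r, finRotate r (finRotate r a) ≠ a) :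
    (G K r ((LieAlgebra.ad K (FreeLieAlgebra K (Fin r)) (FreeLieAlgebra.of K j) ^ n)
      (FreeLieAlgebra.of K (finRotate r j)))).coeff (wrd r n 0 i (finRotate r i)) = 0 := by
  classical
  rw [adpow_expand, MonoidAlgebra.coeff_sum, Finsupp.finset_sum_apply]
  apply Finset.sum_eq_zero
  intro k hk
  rw [MonoidAlgebra.single_apply,
    if_neg (wrd_ne_cross r (Nat.lt_succ_iff.mp (Finset.mem_range.mp hk)) hn1 hij hrot hcase)]

/-! ### Quotient compatibility -/

theorem mk_adpow (s : ℕ) (x y : FreeLieAlgebra K (Fin r)) (n : ℕ) :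
    (LieAlgebra.ad K (FreeNilpotentLie K r s)
      (LieSubmodule.Quotient.mk' (LieModule.lowerCentralSeries K (FreeLieAlgebra K (Fin r))
        (FreeLieAlgebra K (Fin r)) s) x) ^ n)
      (LieSubmodule.Quotient.mk' _ y)
    = LieSubmodule.Quotient.mk' _
        ((LieAlgebra.ad K (FreeLieAlgebra K (Fin r)) x ^ n) y) := by
  induction n with
  | zero => simp
  | succ n ih =>
    rw [pow_succ', Module.End.mul_apply, ih, LieAlgebra.ad_apply, pow_succ',
      Module.End.mul_apply, LieAlgebra.ad_apply]
    rfl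

/-! ### Main helper -/

theorem helper (s n : ℕ) (hr : 2 ≤ r) (hn1 : 1 ≤ n) (hns : n < s)
    (hcase : 2 ≤ n ∨ 3 ≤ r) :
    LinearIndependent K (fun i : Fin r =>
      (LieAlgebra.ad K (FreeNilpotentLie K r s) (FreeNilpotentLie.gen K r s i) ^ n)
        (FreeNilpotentLie.gen K r s (finRotate r i))) := by
  classical
  have hrot : ∀ a : Fin r, finRotate r a ≠ a := finRotate_ne r hr
  have hcase' : 2 ≤ n ∨ ∀ a : Fin r, finRotate r (finRotate r a) ≠ a :=
    hcase.imp id (finRotate_sq_ne r)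
  set N := LieModule.lowerCentralSeries K (FreeLieAlgebra K (Fin r))
    (FreeLieAlgebra K (Fin r)) s with hN
  rw [Fintype.linearIndependent_iff]
  intro g hg i
  set w : FreeMonoid (Fin r) := wrd r n 0 i (finRotate r i) with hw
  have hker : N.toSubmodule ≤ LinearMap.ker
      ((Finsupp.lapply w).comp ((MonoidAlgebra.coeffLinearEquiv K).toLinearMap.comp
        (G K r).toLinearMap)) := by
    intro x hx
    rw [LinearMap.mem_ker, LinearMap.comp_apply, Finsupp.lapply_apply]
    show (G K r x).coeff w = 0
    apply lcs_mem_V K r s x hx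
    rw [wrd_len r n 0 (by omega)]
    omega
  set lam : FreeNilpotentLie K r s →ₗ[K] K :=
    Submodule.liftQ N.toSubmodule ((Finsupp.lapply w).comp
        ((MonoidAlgebra.coeffLinearEquiv K).toLinearMap.comp (G K r).toLinearMap)) hker with hlam
  have happ : ∀ x : FreeLieAlgebra K (Fin r),
      lam (LieSubmodule.Quotient.mk' N x) = (G K r x).coeff w := fun x => rfl
  have hval : ∀ j : Fin r,
      lam ((LieAlgebra.ad K (FreeNilpotentLie K r s) (FreeNilpotentLie.gen K r s j) ^ n)
        (FreeNilpotentLie.gen K r s (finRotate r j))) = if j = i then 1 else 0 := by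
    intro j
    rw [FreeNilpotentLie.gen, FreeNilpotentLie.gen, mk_adpow, happ]
    by_cases hji : j = i
    · subst hji
      rw [if_pos rfl, hw]
      exact coeff_diag K r j (finRotate r j) (hrot j) n
    · rw [if_neg hji, hw]
      exact coeff_cross K r (Ne.symm hji) n hn1 hrot hcase'
  have := congrArg lam hg
  rw [map_sum, map_zero] at this
  simp only [map_smul, hval, smul_eq_mul, mul_ite, mul_one, mul_zero] at this
  rwa [Finset.sum_ite_eq' Finset.univ i g, if_pos (Finset.mem_univ i)] at this

end Stmt8

theorem eta_and_brackets_linearIndependent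
    (K : Type*) [Field K] [CharZero K] (r s : ℕ) (hr : 2 ≤ r) (hs : 3 ≤ s)
    (h : 3 ≤ r ∨ 4 ≤ s) :
    LinearIndependent K (fun i : Fin r =>
      (LieAlgebra.ad K (FreeNilpotentLie K r s) (FreeNilpotentLie.gen K r s i) ^ (s - 2))
        (FreeNilpotentLie.gen K r s (finRotate r i))) ∧
    LinearIndependent K (fun i : Fin r =>
      ⁅FreeNilpotentLie.gen K r s i,
        (LieAlgebra.ad K (FreeNilpotentLie K r s) (FreeNilpotentLie.gen K r s i) ^ (s - 2))
          (FreeNilpotentLie.gen K r s (finRotate r i))⁆) := by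
  constructor
  · exact Stmt8.helper K r s (s - 2) hr (by omega) (by omega)
      (h.symm.imp (by omega) id)
  · have hfun : (fun i : Fin r =>
        ⁅FreeNilpotentLie.gen K r s i,
          (LieAlgebra.ad K (FreeNilpotentLie K r s) (FreeNilpotentLie.gen K r s i) ^ (s - 2))
            (FreeNilpotentLie.gen K r s (finRotate r i))⁆)
        = fun i : Fin r =>
          (LieAlgebra.ad K (FreeNilpotentLie K r s) (FreeNilpotentLie.gen K r s i) ^ (s - 1))
            (FreeNilpotentLie.gen K r s (finRotate r i)) := by
      funext i
      rw [show s - 1 = (s - 2) + 1 by omega, pow_succ', Module.End.mul_apply,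
        LieAlgebra.ad_apply]
    rw [hfun]
    exact Stmt8.helper K r s (s - 1) hr (by omega) (by omega) (Or.inl (by omega))
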